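/- For every positive integer n and every real x ≥ 0, the n-th derivative of the arctangent function satisfies dⁿ/dxⁿ arctan(x) = (−1)^(n−1) (n−1)! / (1+x²)^(n/2) · sin( n · arcsin( 1/√(1+x²) ) ). -/

import Mathlib

open Real

noncomputable def arctanDerivAux (n : ℕ) (x : ℝ) : ℝ :=
  (-1) ^ (n - 1) * (Nat.factorial (n - 1) : ℝ) / (1 + x ^ 2) ^ ((n : ℝ) / 2) *
    Real.sin (n * (π / 2 - Real.arctan x))

lemma arctanDerivAux_hasDerivAt (m : ℕ) (x : ℝ) :
    HasDerivAt (arctanDerivAux (m + 1)) (arctanDerivAux (m + 2) x) x := by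
  have hp : (0:ℝ) < 1 + x ^ 2 := by positivity
  have hs : (0:ℝ) < Real.sqrt (1 + x ^ 2) := Real.sqrt_pos.2 hp
  set c : ℝ := (-1) ^ m * (Nat.factorial m : ℝ) with hc
  have h1 : HasDerivAt (fun y : ℝ => 1 + y ^ 2) (2 * x) x := by
    simpa using ((hasDerivAt_pow 2 x).const_add 1)
  have h2 : HasDerivAt (fun y : ℝ => (1 + y ^ 2) ^ (-((m:ℝ)+1)/2))
      (2 * x * (-((m:ℝ)+1)/2) * (1 + x ^ 2) ^ (-((m:ℝ)+1)/2 - 1)) x :=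
    h1.rpow_const (Or.inl hp.ne')
  have h3 : HasDerivAt (fun y : ℝ => ((m:ℝ)+1) * (π / 2 - Real.arctan y))
      (((m:ℝ)+1) * -(1 / (1 + x ^ 2))) x :=
    (((Real.hasDerivAt_arctan x).const_sub (π / 2)).const_mul _)
  have h4 : HasDerivAt (fun y : ℝ => Real.sin (((m:ℝ)+1) * (π / 2 - Real.arctan y)))
      (Real.cos (((m:ℝ)+1) * (π / 2 - Real.arctan x)) * (((m:ℝ)+1) * -(1 / (1 + x ^ 2)))) x :=
    (Real.hasDerivAt_sin _).comp x h3
  have hD := ((h2.mul h4).const_mul c)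
  have hfun : arctanDerivAux (m + 1) =
      fun y : ℝ => c * ((1 + y ^ 2) ^ (-((m:ℝ)+1)/2) *
        Real.sin (((m:ℝ)+1) * (π / 2 - Real.arctan y))) := by
    funext y
    have hpy : (0:ℝ) < 1 + y ^ 2 := by positivity
    rw [arctanDerivAux]
    rw [show (-((m:ℝ)+1)/2) = -(((m:ℝ)+1)/2) by ring, Real.rpow_neg hpy.le]
    push_cast [Nat.add_sub_cancel]
    ring
  rw [hfun]
  refine hD.congr_deriv (Eq.symm ?_)
  -- now prove the value identity
  set θ := π / 2 - Real.arctan x with hθ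
  have hsin : Real.sin θ = 1 / Real.sqrt (1 + x ^ 2) := by
    rw [hθ, Real.sin_pi_div_two_sub, Real.cos_arctan]
  have hcos : Real.cos θ = x / Real.sqrt (1 + x ^ 2) := by
    rw [hθ, Real.cos_pi_div_two_sub, Real.sin_arctan]
  have haddsin : Real.sin (((m:ℝ)+2) * θ) =
      Real.sin (((m:ℝ)+1) * θ) * Real.cos θ + Real.cos (((m:ℝ)+1) * θ) * Real.sin θ := by
    rw [show ((m:ℝ)+2) * θ = ((m:ℝ)+1) * θ + θ by ring, Real.sin_add]
  have hsq : Real.sqrt (1 + x ^ 2) * Real.sqrt (1 + x ^ 2) = 1 + x ^ 2 :=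
    Real.mul_self_sqrt hp.le
  have hr1 : (1 + x ^ 2 : ℝ) ^ (((m:ℝ)+2)/2) =
      (1 + x ^ 2) ^ (((m:ℝ)+1)/2) * Real.sqrt (1 + x ^ 2) := by
    rw [Real.sqrt_eq_rpow, ← Real.rpow_add hp,
      show ((m:ℝ)+1)/2 + (1:ℝ)/2 = ((m:ℝ)+2)/2 by ring]
  have hr2 : (1 + x ^ 2 : ℝ) ^ (-((m:ℝ)+1)/2) =
      ((1 + x ^ 2) ^ (((m:ℝ)+1)/2))⁻¹ := by
    rw [show (-((m:ℝ)+1)/2) = -(((m:ℝ)+1)/2) by ring, Real.rpow_neg hp.le]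
  have hr3 : (1 + x ^ 2 : ℝ) ^ (-((m:ℝ)+1)/2 - 1) =
      ((1 + x ^ 2) ^ (((m:ℝ)+1)/2))⁻¹ / (1 + x ^ 2) := by
    rw [Real.rpow_sub hp, Real.rpow_one, hr2]
  have hApos : (0:ℝ) < (1 + x ^ 2) ^ (((m:ℝ)+1)/2) := Real.rpow_pos_of_pos hp _
  rw [arctanDerivAux]
  rw [← hθ] at *
  push_cast [Nat.add_sub_cancel]
  rw [hr1, hr2, hr3, haddsin, hsin, hcos, hc]
  rw [show ((-1:ℝ)) ^ (m+1) = -(-1)^m by ring,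
      show ((Nat.factorial (m+1) : ℝ)) = ((m:ℝ)+1) * (Nat.factorial m : ℝ) by
        push_cast [Nat.factorial_succ]; try ring]
  have hsq2 : (Real.sqrt (1 + x ^ 2)) ^ 2 = 1 + x ^ 2 := Real.sq_sqrt hp.le
  field_simp
  ring_nf
  rw [hsq2]
  ring

lemma arctan_iteratedDeriv_eq_aux (m : ℕ) :
    iteratedDeriv (m + 1) Real.arctan = arctanDerivAux (m + 1) := by
  induction m with
  | zero =>
    funext x
    have hp : (0:ℝ) < 1 + x ^ 2 := by positivity
    rw [iteratedDeriv_one, Real.deriv_arctan, arctanDerivAux]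
    simp only [Nat.cast_one, Nat.add_sub_cancel, pow_zero, Nat.factorial_zero, one_mul,
      Nat.cast_one]
    rw [show ((0+1:ℕ):ℝ) = 1 by norm_num, one_mul, Real.sin_pi_div_two_sub,
      Real.cos_arctan, Real.sqrt_eq_rpow]
    have h2 : ((1+x^2:ℝ) ^ ((1:ℝ)/2)) * ((1+x^2:ℝ) ^ ((1:ℝ)/2)) = 1 + x^2 := by
      rw [← Real.rpow_add hp]; norm_num
    have hpos : (0:ℝ) < (1+x^2:ℝ) ^ ((1:ℝ)/2) := Real.rpow_pos_of_pos hp _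
    rw [div_mul_div_comm, one_mul, h2]
  | succ k ih =>
    funext x
    rw [iteratedDeriv_succ, ih]
    exact (arctanDerivAux_hasDerivAt k x).deriv

theorem arctan_iteratedDeriv_nonneg (n : ℕ) (hn : 0 < n) (x : ℝ) (hx : 0 ≤ x) :
    iteratedDeriv n Real.arctan x =
      (-1) ^ (n - 1) * (Nat.factorial (n - 1) : ℝ) / (1 + x ^ 2) ^ ((n : ℝ) / 2) *
        Real.sin (n * Real.arcsin (1 / Real.sqrt (1 + x ^ 2))) := by
  obtain ⟨m, rfl⟩ := Nat.exists_eq_succ_of_ne_zero hn.ne'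
  rw [arctan_iteratedDeriv_eq_aux m, arctanDerivAux]
  congr 2
  rw [← Real.cos_arctan, ← Real.sin_pi_div_two_sub]
  rw [Real.arcsin_sin]
  · linarith [Real.arctan_lt_pi_div_two x, Real.pi_pos]
  · have h0 : 0 ≤ Real.arctan x := by
      have := Real.arctan_strictMono.monotone hx
      simpa using this
    linarith
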